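/- A finite undirected graph admits an acyclic orientation with no v-structures (an AMO) if and only if it is chordal. -/

import Mathlib

/-- A graph is chordal if every cycle of length at least 4 has a chord. -/
def IsChordal {V : Type} (G : SimpleGraph V) : Prop :=
  ∀ ⦃v : V⦄ (c : G.Walk v v), c.IsCycle → 4 ≤ c.length →
    ∃ u w : V, u ∈ c.support ∧ w ∈ c.support ∧ G.Adj u w ∧ s(u, w) ∉ c.edges

/-- `D` is an orientation of `G`: it directs exactly the edges of `G`. -/
def IsOrientation {V : Type} (G : SimpleGraph V) (D : V → V → Prop) : Prop :=
  (∀ u v, D u v → G.Adj u v) ∧ (∀ u v, G.Adj u v → (D u v ↔ ¬ D v u))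

/-- An AMO of `G`: an acyclic orientation with no v-structure. -/
def IsAMO {V : Type} (G : SimpleGraph V) (D : V → V → Prop) : Prop :=
  IsOrientation G D ∧ (∀ v, ¬ Relation.TransGen D v v) ∧
  ¬ ∃ a b c : V, a ≠ b ∧ ¬ G.Adj a b ∧ D a c ∧ D b c



open SimpleGraph








/-- In a walk with nodup support, an edge incident to the start vertex must be the first edge. -/
lemma edge_start_cases {V : Type} {G : SimpleGraph V} {x z y : V} (q : G.Walk x z)
    (hnd : q.support.Nodup) (h : s(x, y) ∈ q.edges) :
    ∃ (h1 : G.Adj x y) (r : G.Walk y z), q = Walk.cons h1 r := by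
  cases q with
  | nil => simp at h
  | @cons _ b _ h1 r =>
    rw [Walk.edges_cons, List.mem_cons] at h
    cases h with
    | inl he =>
      have hb : y = b := by
        rw [Sym2.congr_right] at he; exact he
      subst hb
      exact ⟨h1, r, rfl⟩
    | inr he =>
      exfalso
      have hx : x ∈ r.support := Walk.fst_mem_support_of_mem_edges r he
      rw [Walk.support_cons] at hnd
      exact (List.nodup_cons.mp hnd).1 hx

/-- A closed walk with nodup support is nil. -/
lemma closed_nodup_nil {V : Type} {G : SimpleGraph V} {y : V} (r : G.Walk y y)
    (hnd : r.support.Nodup) : r.length = 0 := by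
  cases r with
  | nil => rfl
  | @cons _ b _ h1 r2 =>
    exfalso
    rw [Walk.support_cons] at hnd
    exact (List.nodup_cons.mp hnd).1 r2.end_mem_support

/-- membership of support for closed non-nil walks passes to the tail. -/
lemma mem_tail_of_closed {V : Type} {G : SimpleGraph V} {v z : V} (c : G.Walk v v)
    (hne : c.length ≠ 0) (h : z ∈ c.support) : z ∈ c.support.tail := by
  cases c with
  | nil => simp at hne
  | @cons _ b _ h1 p =>
    rw [Walk.support_cons, List.mem_cons] at h
    rw [Walk.support_cons, List.tail_cons]
    rcases h with rfl | h
    · exact p.end_mem_support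
    · exact h

lemma length_rotate' {V : Type} [DecidableEq V] {G : SimpleGraph V} {v m : V} (c : G.Walk v v)
    (hm : m ∈ c.support) : (c.rotate m hm).length = c.length := by
  rw [Walk.rotate, Walk.length_append, Nat.add_comm, ← Walk.length_append, Walk.take_spec]

lemma amo_chordal {V : Type} [Fintype V] {G : SimpleGraph V} {D : V → V → Prop}
    (hamo : IsAMO G D) : IsChordal G := by
  classical
  obtain ⟨⟨hDadj, hDor⟩, hacyc, hnov⟩ := hamo
  intro v c hc hlen
  -- a maximal vertex on the cycle w.r.t. the acyclic orientation
  haveI : IsTrans V (fun p q => Relation.TransGen D q p) :=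
    ⟨fun a b c h1 h2 => Relation.TransGen.trans h2 h1⟩
  haveI : IsIrrefl V (fun p q => Relation.TransGen D q p) := ⟨fun a => hacyc a⟩
  have wf : WellFounded (fun p q : V => Relation.TransGen D q p) :=
    Finite.wellFounded_of_trans_of_irrefl _
  obtain ⟨m, hmS, hmax⟩ := wf.has_min {z | z ∈ c.support} ⟨v, c.start_mem_support⟩
  have hmax' : ∀ x ∈ c.support, ¬ Relation.TransGen D m x := fun x hx => hmax x hx
  -- rotate the cycle to start at m
  set c' := c.rotate m hmS with hc'def
  have hc' : c'.IsCycle := hc.rotate hmS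
  have hlen' : c'.length = c.length := length_rotate' c hmS
  have hmemtail : ∀ z, z ∈ c'.support → z ∈ c.support := by
    intro z hz
    have h1 : z ∈ c'.support.tail := mem_tail_of_closed c' (by omega) hz
    have h2 := (Walk.support_rotate c m hmS).mem_iff.mp h1
    exact List.mem_of_mem_tail h2
  have hmemedge : ∀ e, e ∈ c'.edges ↔ e ∈ c.edges := fun e =>
    (Walk.rotate_edges c m hmS).mem_iff
  clear_value c'
  clear hc'def
  cases c' with
  | nil => simp at hlen'; omega
  | @cons _ x _ hmx p =>
    -- decompose p from the back
    have hplen : 3 ≤ p.length := by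
      rw [Walk.length_cons] at hlen'; omega
    have hpnil : ¬ p.reverse.Nil := by
      rw [Walk.nil_iff_length_eq, Walk.length_reverse]; omega
    obtain ⟨y, hmy, q', hq'⟩ : ∃ (y : V) (hmy : G.Adj m y) (q' : G.Walk y x),
        p.reverse = Walk.cons hmy q' := by
      cases hr : p.reverse with
      | nil => rw [hr] at hpnil; simp at hpnil
      | cons h1 r => exact ⟨_, h1, r, rfl⟩
    have hp : p = q'.reverse.concat hmy.symm := by
      have := congrArg Walk.reverse hq'
      rw [Walk.reverse_reverse, Walk.reverse_cons] at this
      exact this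
    set q := q'.reverse with hqdef
    have hym : G.Adj y m := hmy.symm
    subst hp
    -- support facts
    have hsupp : (Walk.cons hmx (q.concat hym)).support = m :: (q.support ++ [m]) := by
      rw [Walk.support_cons, Walk.support_concat]
    have htail : (Walk.cons hmx (q.concat hym)).support.tail = q.support ++ [m] := by
      rw [hsupp]; rfl
    have hnd : (q.support ++ [m]).Nodup := by
      have := hc'.2
      rwa [htail] at this
    have hqnd : q.support.Nodup := (List.nodup_append.mp hnd).1
    have hmq : m ∉ q.support := by
      intro hm
      have := (List.nodup_append.mp hnd).2.2
      exact this m hm m (List.mem_singleton_self m) rfl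
    have hqlen : 2 ≤ q.length := by
      have := Walk.length_concat q hym
      omega
    have hxs : x ∈ c.support := by
      apply hmemtail
      rw [Walk.support_cons]
      apply List.mem_cons_of_mem
      rw [Walk.support_concat, List.mem_append]
      exact Or.inl q.start_mem_support
    have hys : y ∈ c.support := by
      apply hmemtail
      rw [Walk.support_cons]
      apply List.mem_cons_of_mem
      rw [Walk.support_concat, List.mem_append]
      exact Or.inl q.end_mem_support
    have hxm : x ≠ m := fun h => hmq (h ▸ q.start_mem_support)
    have hym' : y ≠ m := fun h => hmq (h ▸ q.end_mem_support)
    have hxy : x ≠ y := by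
      intro h
      subst h
      cases hq : q with
      | nil => rw [hq] at hqlen; simp at hqlen
      | cons h1 r =>
        rw [hq, Walk.support_cons] at hqnd
        exact (List.nodup_cons.mp hqnd).1 r.end_mem_support
    -- m is a sink for the two cycle edges
    have hDxm : D x m := by
      have h1 : ¬ D m x := fun h => hmax' x hxs (Relation.TransGen.single h)
      have := hDor m x hmx
      by_contra h2
      exact h1 (this.mpr (by
        intro h3
        exact h2 h3))
    have hDym : D y m := by
      have h1 : ¬ D m y := fun h => hmax' y hys (Relation.TransGen.single h)
      have := hDor m y hmy
      by_contra h2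
      exact h1 (this.mpr (fun h3 => h2 h3))
    by_cases hadj : G.Adj x y
    · -- must be a chord, else contradiction
      by_cases he : s(x, y) ∈ c.edges
      · exfalso
        have he' : s(x, y) ∈ (Walk.cons hmx (q.concat hym)).edges := (hmemedge _).mpr he
        rw [Walk.edges_cons, Walk.edges_concat, List.concat_eq_append, List.mem_cons,
          List.mem_append, List.mem_singleton] at he'
        rcases he' with h1 | h2 | h3
        · -- s(x,y) = s(m,x)
          rcases Sym2.eq_iff.mp h1 with ⟨h1a, h1b⟩ | ⟨h1a, h1b⟩
          · exact hxm h1a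
          · exact hym' h1b
        · -- in q.edges
          obtain ⟨_, r, hr⟩ := edge_start_cases q hqnd h2
          have : r.length = 0 := closed_nodup_nil r (by
            rw [hr, Walk.support_cons] at hqnd
            exact (List.nodup_cons.mp hqnd).2)
          rw [hr, Walk.length_cons] at hqlen
          omega
        · -- s(x,y) = s(y,m)
          rcases Sym2.eq_iff.mp h3 with ⟨h3a, h3b⟩ | ⟨h3a, h3b⟩
          · exact hxy h3a
          · exact hxm h3a
      · exact ⟨x, y, hxs, hys, hadj, he⟩
    · exact absurd ⟨x, y, m, hxy, hadj, hDxm, hDym⟩ hnov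





/-- One adjacency step inside a set `T`. -/
def GStp {V : Type} (G : SimpleGraph V) (T : Set V) (p q : V) : Prop :=
  p ∈ T ∧ q ∈ T ∧ G.Adj p q

/-- GConnectivity within a set `T`. -/
def GCon {V : Type} (G : SimpleGraph V) (T : Set V) : V → V → Prop :=
  Relation.ReflTransGen (GStp G T)

variable {V : Type} {G : SimpleGraph V} {T T' : Set V} {u w z : V}

lemma GCon.refl : GCon G T u u := Relation.ReflTransGen.refl

lemma GCon.mono (hT : T ⊆ T') (h : GCon G T u w) : GCon G T' u w :=
  Relation.ReflTransGen.mono (fun p q hpq => ⟨hT hpq.1, hT hpq.2.1, hpq.2.2⟩) _ _ h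

lemma GCon.symm (h : GCon G T u w) : GCon G T w u :=
  (@Relation.ReflTransGen.symmetric _ _
    ⟨fun p q hpq => ⟨hpq.2.1, hpq.1, hpq.2.2.symm⟩⟩).symm _ _ h

lemma GCon.trans {v : V} (h : GCon G T u v) (h' : GCon G T v w) : GCon G T u w :=
  Relation.ReflTransGen.trans h h'

lemma GCon.mem_right (hu : u ∈ T) (h : GCon G T u w) : w ∈ T := by
  induction h with
  | refl => exact hu
  | tail _ hstep _ => exact hstep.2.1

lemma GCon.tail' (h : GCon G T u w) (hw : w ∈ T) (hz : z ∈ T) (hadj : G.Adj w z) :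
    GCon G T u z := Relation.ReflTransGen.tail h ⟨hw, hz, hadj⟩

/-- restrict connectivity to the reachable set. -/
lemma GCon.self_set {a x : V} (h : GCon G T a x) : GCon G {z | GCon G T a z} a x := by
  induction h with
  | refl => exact GCon.refl
  | @tail p q hcon hstep ih =>
      exact Relation.ReflTransGen.tail ih ⟨hcon, GCon.tail' hcon hstep.1 hstep.2.1 hstep.2.2,
        hstep.2.2⟩

/-- Extract a walk from connectivity. -/
lemma GCon.exists_walk (h : GCon G T u w) :
    ∃ p : G.Walk u w, ∀ z ∈ p.support, z ∈ insert u T := by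
  induction h with
  | refl => exact ⟨Walk.nil, by simp⟩
  | @tail p q hcon hstep ih =>
      obtain ⟨P, hP⟩ := ih
      refine ⟨P.concat hstep.2.2, ?_⟩
      intro z hz
      rw [Walk.support_concat, List.mem_append, List.mem_singleton] at hz
      rcases hz with hz | rfl
      · exact hP z hz
      · exact Set.mem_insert_iff.mpr (Or.inr hstep.2.1)

/-- A good walk: all internal vertices in `A`. -/
def Good {V : Type} (G : SimpleGraph V) (A : Set V) (x y : V) (p : G.Walk x y) : Prop :=
  ∀ z ∈ p.support, z = x ∨ z = y ∨ z ∈ A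

lemma exists_min_good {x y : V} (A : Set V)
    (h : ∃ p : G.Walk x y, Good G A x y p) :
    ∃ P : G.Walk x y, Good G A x y P ∧ P.IsPath ∧
      ∀ q : G.Walk x y, Good G A x y q → P.length ≤ q.length := by
  classical
  obtain ⟨p, hp⟩ := h
  have hn : ∃ n, ∃ p : G.Walk x y, Good G A x y p ∧ p.length = n := ⟨p.length, p, hp, rfl⟩
  obtain ⟨p₀, hp₀, hlen₀⟩ := Nat.find_spec hn
  refine ⟨p₀.bypass, ?_, p₀.bypass_isPath, ?_⟩
  · intro z hz
    exact hp₀ z (p₀.support_bypass_subset hz)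
  · intro q hq
    calc p₀.bypass.length ≤ p₀.length := p₀.length_bypass_le
    _ = Nat.find hn := hlen₀
    _ ≤ q.length := Nat.find_min' hn ⟨q, hq, rfl⟩

lemma edge_mem_of_length_one {p : G.Walk u w} (h : p.length = 1) : s(u, w) ∈ p.edges := by
  cases p with
  | nil => simp at h
  | @cons _ b _ h1 r =>
    rw [Walk.length_cons] at h
    have : b = w := Walk.eq_of_length_eq_zero (p := r) (by omega)
    subst this
    simp

/-- The shortcut lemma: if two vertices on a walk are adjacent but that edge isn't used
by the walk, there is a strictly shorter walk on the same vertex set. -/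
lemma shortcut {x y : V} [DecidableEq V] {P : G.Walk x y} {u w : V} (hu : u ∈ P.support)
    (hw : w ∈ P.support) (hadj : G.Adj u w) (he : s(u, w) ∉ P.edges) :
    ∃ q : G.Walk x y, q.length < P.length ∧ ∀ z ∈ q.support, z ∈ P.support := by
  have hlenP : (P.takeUntil u hu).length + (P.dropUntil u hu).length = P.length := by
    have := congrArg Walk.length (P.take_spec hu)
    rwa [Walk.length_append] at this
  by_cases hwd : w ∈ (P.dropUntil u hu).support
  · -- w occurs after u
    set R := P.dropUntil u hu with hR
    have hRP : R.edges ⊆ P.edges := P.edges_dropUntil_subset hu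
    have hRsup : R.support ⊆ P.support := P.support_dropUntil_subset hu
    have hlenR : (R.takeUntil w hwd).length + (R.dropUntil w hwd).length = R.length := by
      have := congrArg Walk.length (R.take_spec hwd)
      rwa [Walk.length_append] at this
    have ht2 : 2 ≤ (R.takeUntil w hwd).length := by
      rcases Nat.lt_or_ge (R.takeUntil w hwd).length 2 with h2 | h2
      · interval_cases h : (R.takeUntil w hwd).length
        · exact absurd (Walk.eq_of_length_eq_zero h) hadj.ne
        · exact absurd (hRP (R.edges_takeUntil_subset hwd (edge_mem_of_length_one h))) he
      · exact h2
    refine ⟨(P.takeUntil u hu).append (Walk.cons hadj (R.dropUntil w hwd)), ?_, ?_⟩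
    · rw [Walk.length_append, Walk.length_cons]
      omega
    · intro z hz
      rw [Walk.mem_support_append_iff] at hz
      rcases hz with hz | hz
      · exact P.support_takeUntil_subset hu hz
      · rw [Walk.support_cons, List.mem_cons] at hz
        rcases hz with rfl | hz
        · exact hu
        · exact hRsup (R.support_dropUntil_subset hwd hz)
  · -- w occurs before u
    have hwt : w ∈ (P.takeUntil u hu).support := by
      have := P.take_spec hu
      have h2 : w ∈ ((P.takeUntil u hu).append (P.dropUntil u hu)).support := by rw [this]; exact hw
      rw [Walk.mem_support_append_iff] at h2
      tauto
    set Tk := P.takeUntil u hu with hTk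
    have hTkP : Tk.edges ⊆ P.edges := P.edges_takeUntil_subset hu
    have hTksup : Tk.support ⊆ P.support := P.support_takeUntil_subset hu
    have hlenT : (Tk.takeUntil w hwt).length + (Tk.dropUntil w hwt).length = Tk.length := by
      have := congrArg Walk.length (Tk.take_spec hwt)
      rwa [Walk.length_append] at this
    have hd2 : 2 ≤ (Tk.dropUntil w hwt).length := by
      rcases Nat.lt_or_ge (Tk.dropUntil w hwt).length 2 with h2 | h2
      · interval_cases h : (Tk.dropUntil w hwt).length
        · exact absurd (Walk.eq_of_length_eq_zero h).symm hadj.ne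
        · refine absurd (hTkP (Tk.edges_dropUntil_subset hwt ?_)) he
          have := edge_mem_of_length_one (p := Tk.dropUntil w hwt) h
          rwa [Sym2.eq_swap] at this
      · exact h2
    refine ⟨(Tk.takeUntil w hwt).append (Walk.cons hadj.symm (P.dropUntil u hu)), ?_, ?_⟩
    · rw [Walk.length_append, Walk.length_cons]
      omega
    · intro z hz
      rw [Walk.mem_support_append_iff] at hz
      rcases hz with hz | hz
      · exact hTksup (Tk.support_takeUntil_subset hwt hz)
      · rw [Walk.support_cons, List.mem_cons] at hz
        rcases hz with rfl | hz
        · exact hw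
        · exact P.support_dropUntil_subset hu hz



open SimpleGraph

/-- Chordality is inherited by induced subgraphs. -/
lemma chordal_induce {V : Type} {G : SimpleGraph V} (hch : IsChordal G) (s : Set V) :
    IsChordal (G.induce s) := by
  intro v c hc hlen
  set f := (SimpleGraph.Embedding.induce (G := G) s) with hf
  have hinj : Function.Injective f := f.injective
  have hc' : (c.map f.toHom).IsCycle := hc.map hinj
  have hlen' : 4 ≤ (c.map f.toHom).length := by rwa [Walk.length_map]
  obtain ⟨u, w, hu, hw, hadj, he⟩ := hch (c.map f.toHom) hc' hlen'
  rw [Walk.support_map, List.mem_map] at hu hw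
  obtain ⟨u', hu', rfl⟩ := hu
  obtain ⟨w', hw', rfl⟩ := hw
  refine ⟨u', w', hu', hw', f.map_adj_iff.mp hadj, ?_⟩
  intro hmem
  apply he
  rw [Walk.edges_map]
  refine List.mem_map.mpr ⟨s(u', w'), hmem, ?_⟩
  rfl


def Simplicial {V : Type} (G : SimpleGraph V) (v : V) : Prop :=
  ∀ ⦃x y : V⦄, G.Adj v x → G.Adj v y → x ≠ y → G.Adj x y

lemma key {V : Type} [Fintype V] {G : SimpleGraph V} (hch : IsChordal G)
    {a b : V} (hab : a ≠ b) (hnadj : ¬ G.Adj a b) :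
    ∃ (S : Finset V) (A B : Set V),
      a ∈ A ∧ b ∈ B ∧
      (∀ z, ¬ (z ∈ A ∧ z ∈ B)) ∧
      (∀ z ∈ A, z ∉ (↑S : Set V)) ∧ (∀ z ∈ B, z ∉ (↑S : Set V)) ∧
      (∀ v ∈ A, ∀ w, G.Adj v w → w ∈ A ∨ w ∈ (↑S : Set V)) ∧
      (∀ v ∈ B, ∀ w, G.Adj v w → w ∈ B ∨ w ∈ (↑S : Set V)) ∧
      (∀ x ∈ S, ∀ y ∈ S, x ≠ y → G.Adj x y) := by
  classical
  have hex : ∃ n, ∃ S : Finset V,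
      (a ∉ S ∧ b ∉ S ∧ ¬ GCon G ((↑S : Set V))ᶜ a b) ∧ S.card = n := by
    refine ⟨_, Finset.univ \ {a, b}, ⟨by simp, by simp, ?_⟩, rfl⟩
    intro hcon
    have hz : ∀ z, GCon G ((↑(Finset.univ \ ({a, b} : Finset V)) : Set V))ᶜ a z → z = a := by
      intro z hz
      induction hz with
      | refl => rfl
      | @tail p q hcon2 hstep ih =>
        have hq : q = a ∨ q = b := by
          have := hstep.2.1
          simp at this
          tauto
        rcases hq with rfl | rfl
        · rfl
        · have h := hstep.2.2
          rw [ih] at h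
          exact absurd h hnadj
    exact hab ((hz b hcon).symm)
  obtain ⟨S, ⟨haS, hbS, hsep⟩, hScard⟩ := Nat.find_spec hex
  have hmin : ∀ S' : Finset V, S'.card < S.card →
      a ∉ S' → b ∉ S' → GCon G ((↑S' : Set V))ᶜ a b := by
    intro S' hlt ha' hb'
    by_contra hcon
    exact Nat.find_min hex (hScard ▸ hlt) ⟨S', ⟨ha', hb', hcon⟩, rfl⟩
  set T : Set V := ((↑S : Set V))ᶜ with hT
  set A : Set V := {z | GCon G T a z} with hA
  set B : Set V := {z | GCon G T b z} with hB
  have haT : a ∈ T := haS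
  have hbT : b ∈ T := hbS
  have haA : a ∈ A := Relation.ReflTransGen.refl
  have hbB : b ∈ B := Relation.ReflTransGen.refl
  have hAT : ∀ z ∈ A, z ∈ T := fun z hz => GCon.mem_right haT hz
  have hBT : ∀ z ∈ B, z ∈ T := fun z hz => GCon.mem_right hbT hz
  have hAB : ∀ z, ¬ (z ∈ A ∧ z ∈ B) := by
    rintro z ⟨h1, h2⟩
    exact hsep (GCon.trans h1 (GCon.symm h2))
  have hAclose : ∀ v ∈ A, ∀ w, G.Adj v w → w ∈ A ∨ w ∈ (↑S : Set V) := by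
    intro v hv w hadj
    by_cases hw : w ∈ (↑S : Set V)
    · exact Or.inr hw
    · exact Or.inl (GCon.tail' hv (hAT v hv) hw hadj)
  have hBclose : ∀ v ∈ B, ∀ w, G.Adj v w → w ∈ B ∨ w ∈ (↑S : Set V) := by
    intro v hv w hadj
    by_cases hw : w ∈ (↑S : Set V)
    · exact Or.inr hw
    · exact Or.inl (GCon.tail' hv (hBT v hv) hw hadj)
  -- every separator vertex has a neighbour in A and in B
  have hsubgen : ∀ (c : V) (C : Set V), C = {z | GCon G T c z} → c ∈ T →
      ∀ s ∈ S, (∀ t ∈ C, ¬ G.Adj s t) →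
      ∀ z, GCon G ((↑(S.erase s) : Set V))ᶜ c z → z ∈ C := by
    intro c C hC hcT s hs hno z hz
    induction hz with
    | refl => rw [hC]; exact Relation.ReflTransGen.refl
    | @tail p q hcon2 hstep ih =>
      have hpC : p ∈ C := ih
      have hqs : q ≠ s := fun h => hno p hpC (h ▸ hstep.2.2.symm)
      have hqT : q ∈ T := by
        intro hqS
        exact hstep.2.1 (by
          simp only [Finset.coe_erase, Set.mem_diff, Set.mem_singleton_iff]
          exact ⟨hqS, hqs⟩)
      rw [hC] at hpC ⊢
      exact GCon.tail' hpC (GCon.mem_right hcT hpC) hqT hstep.2.2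
  have hnbA : ∀ s ∈ S, ∃ t, t ∈ A ∧ G.Adj s t := by
    intro s hs
    by_contra hno
    push_neg at hno
    have hcon := hmin (S.erase s) (Finset.card_erase_lt_of_mem hs)
      (fun h => haS (Finset.mem_of_mem_erase h)) (fun h => hbS (Finset.mem_of_mem_erase h))
    exact hsep (hsubgen a A hA haT s hs (fun t ht hadj => hno t ht hadj) b hcon)
  have hnbB : ∀ s ∈ S, ∃ t, t ∈ B ∧ G.Adj s t := by
    intro s hs
    by_contra hno
    push_neg at hno
    have hcon := hmin (S.erase s) (Finset.card_erase_lt_of_mem hs)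
      (fun h => haS (Finset.mem_of_mem_erase h)) (fun h => hbS (Finset.mem_of_mem_erase h))
    exact hsep (GCon.symm
      (hsubgen b B hB hbT s hs (fun t ht hadj => hno t ht hadj) a (GCon.symm hcon)))
  -- S is a clique
  have hclq : ∀ x ∈ S, ∀ y ∈ S, x ≠ y → G.Adj x y := by
    intro x hx y hy hxy
    by_contra hnxy
    -- good walks through A and through B
    have hgood : ∀ (c : V) (C : Set V), C = {z | GCon G T c z} → c ∈ T →
        (∀ s ∈ S, ∃ t, t ∈ C ∧ G.Adj s t) → ∃ p : G.Walk x y, Good G C x y p := by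
      intro c C hC hcT hnb
      obtain ⟨ax, haxC, haxadj⟩ := hnb x hx
      obtain ⟨ay, hayC, hayadj⟩ := hnb y hy
      have hax' : GCon G C c ax := by rw [hC]; rw [hC] at haxC; exact GCon.self_set haxC
      have hay' : GCon G C c ay := by rw [hC]; rw [hC] at hayC; exact GCon.self_set hayC
      obtain ⟨W, hW⟩ := (GCon.trans (GCon.symm hax') hay').exists_walk
      refine ⟨Walk.cons haxadj (W.concat hayadj.symm), ?_⟩
      intro z hz
      rw [Walk.support_cons, List.mem_cons] at hz
      rcases hz with rfl | hz
      · exact Or.inl rfl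
      · rw [Walk.support_concat, List.mem_append,
          List.mem_singleton] at hz
        rcases hz with hz | rfl
        · refine Or.inr (Or.inr ?_)
          rcases Set.mem_insert_iff.mp (hW z hz) with rfl | h
          · exact haxC
          · exact h
        · exact Or.inr (Or.inl rfl)
    obtain ⟨P1, hP1good, hP1path, hP1min⟩ := exists_min_good A (hgood a A hA haT hnbA)
    obtain ⟨P2, hP2good, hP2path, hP2min⟩ := exists_min_good B (hgood b B hB hbT hnbB)
    have hlen2 : ∀ (P : G.Walk x y), 2 ≤ P.length ∨ P.length = 0 ∨ P.length = 1 := by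
      intro P; omega
    have hl1 : 2 ≤ P1.length := by
      rcases hlen2 P1 with h | h | h
      · exact h
      · exact absurd (Walk.eq_of_length_eq_zero h) hxy
      · exact absurd (Walk.adj_of_mem_edges P1 (edge_mem_of_length_one h)) hnxy
    have hl2 : 2 ≤ P2.length := by
      rcases hlen2 P2 with h | h | h
      · exact h
      · exact absurd (Walk.eq_of_length_eq_zero h) hxy
      · exact absurd (Walk.adj_of_mem_edges P2 (edge_mem_of_length_one h)) hnxy
    set C : G.Walk x x := P1.append P2.reverse with hCdef
    have hClen : C.length = P1.length + P2.length := by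
      rw [hCdef, Walk.length_append, Walk.length_reverse]
    have hmemC : ∀ z, z ∈ C.support → z ∈ P1.support ∨ z ∈ P2.support := by
      intro z hz
      rw [hCdef, Walk.mem_support_append_iff] at hz
      rcases hz with hz | hz
      · exact Or.inl hz
      · right; rwa [Walk.support_reverse, List.mem_reverse] at hz
    have hxA : x ∉ A := fun h => hAT x h hx
    have hxB : x ∉ B := fun h => hBT x h hx
    have hyA : y ∉ A := fun h => hAT y h hy
    have hyB : y ∉ B := fun h => hBT y h hy
    have hclass1 : ∀ z ∈ P1.support, z ∉ P2.support → z ∈ A := by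
      intro z hz hz2
      rcases hP1good z hz with rfl | rfl | h
      · exact absurd P2.start_mem_support hz2
      · exact absurd P2.end_mem_support hz2
      · exact h
    have hclass2 : ∀ z ∈ P2.support, z ∉ P1.support → z ∈ B := by
      intro z hz hz1
      rcases hP2good z hz with rfl | rfl | h
      · exact absurd P1.start_mem_support hz1
      · exact absurd P1.end_mem_support hz1
      · exact h
    have hmem12 : ∀ z, z ∈ P1.support → z ∈ P2.support → z = x ∨ z = y := by
      intro z h1 h2
      rcases hP1good z h1 with rfl | rfl | hzA
      · exact Or.inl rfl
      · exact Or.inr rfl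
      · rcases hP2good z h2 with rfl | rfl | hzB
        · exact Or.inl rfl
        · exact Or.inr rfl
        · exact absurd ⟨hzA, hzB⟩ (hAB z)
    have hCcyc : C.IsCycle := by
      have hedisj : ∀ e, e ∈ P1.edges → e ∈ P2.edges → False := by
        intro e h1 h2
        induction e with
        | h c d =>
          have hadj : G.Adj c d := Walk.adj_of_mem_edges P1 h1
          have hc1 : c ∈ P1.support := Walk.fst_mem_support_of_mem_edges P1 h1
          have hd1 : d ∈ P1.support := Walk.snd_mem_support_of_mem_edges P1 h1
          have hc2 : c ∈ P2.support := Walk.fst_mem_support_of_mem_edges P2 h2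
          have hd2 : d ∈ P2.support := Walk.snd_mem_support_of_mem_edges P2 h2
          rcases hmem12 c hc1 hc2 with rfl | rfl <;> rcases hmem12 d hd1 hd2 with rfl | rfl
          · exact G.irrefl hadj
          · exact hnxy hadj
          · exact hnxy hadj.symm
          · exact G.irrefl hadj
      refine ⟨⟨⟨?_⟩, ?_⟩, ?_⟩
      · rw [hCdef, Walk.edges_append, Walk.edges_reverse]
        rw [List.nodup_append]
        refine ⟨hP1path.isTrail.edges_nodup, ?_, ?_⟩
        · rw [List.nodup_reverse]
          exact hP2path.isTrail.edges_nodup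
        · intro e he1 e' he2 hee
          subst hee
          exact hedisj e he1 (List.mem_reverse.mp he2)
      · intro h
        have := congrArg Walk.length h
        rw [hClen] at this
        simp only [Walk.length_nil] at this
        omega
      · rw [hCdef, Walk.tail_support_append]
        rw [List.nodup_append]
        refine ⟨hP1path.support_nodup.tail, hP2path.reverse.support_nodup.tail, ?_⟩
        intro z hz1 z' hz2 hzz'
        subst hzz'
        have hzx : z ≠ x := by
          intro rfl_h
          subst rfl_h
          have := hP1path.support_nodup
          rw [Walk.support_eq_cons] at this
          exact (List.nodup_cons.mp this).1 hz1
        have hzy : z ≠ y := by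
          intro rfl_h
          subst rfl_h
          have := hP2path.reverse.support_nodup
          rw [Walk.support_eq_cons] at this
          exact (List.nodup_cons.mp this).1 hz2
        have hz1' : z ∈ P1.support := List.mem_of_mem_tail hz1
        have hz2' : z ∈ P2.support := by
          have := List.mem_of_mem_tail hz2
          rwa [Walk.support_reverse, List.mem_reverse] at this
        rcases hmem12 z hz1' hz2' with rfl | rfl
        · exact hzx rfl
        · exact hzy rfl
    obtain ⟨u, w, hu, hw, hadjuw, heuw⟩ := hch C hCcyc (by omega)
    have he1 : s(u, w) ∉ P1.edges := by
      intro h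
      exact heuw (by rw [hCdef, Walk.edges_append, List.mem_append]; exact Or.inl h)
    have he2 : s(u, w) ∉ P2.edges := by
      intro h
      refine heuw ?_
      rw [hCdef, Walk.edges_append, List.mem_append, Walk.edges_reverse, List.mem_reverse]
      exact Or.inr h
    have hshort1 : u ∈ P1.support → w ∈ P1.support → False := by
      intro hu1 hw1
      obtain ⟨q, hqlen, hqsup⟩ := shortcut hu1 hw1 hadjuw he1
      have hqgood : Good G A x y q := fun z hz => hP1good z (hqsup z hz)
      exact absurd (hP1min q hqgood) (by omega)
    have hshort2 : u ∈ P2.support → w ∈ P2.support → False := by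
      intro hu2 hw2
      obtain ⟨q, hqlen, hqsup⟩ := shortcut hu2 hw2 hadjuw he2
      have hqgood : Good G B x y q := fun z hz => hP2good z (hqsup z hz)
      exact absurd (hP2min q hqgood) (by omega)
    have hcross : ∀ p q : V, G.Adj p q → p ∈ A → q ∈ B → False := by
      intro p q hadj hpA hqB
      rcases hAclose p hpA q hadj with h | h
      · exact hAB q ⟨h, hqB⟩
      · exact hBT q hqB h
    rcases hmemC u hu with hu1 | hu2 <;> rcases hmemC w hw with hw1 | hw2
    · exact hshort1 hu1 hw1
    · by_cases hu2 : u ∈ P2.support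
      · exact hshort2 hu2 hw2
      · by_cases hw1 : w ∈ P1.support
        · exact hshort1 hu1 hw1
        · exact hcross u w hadjuw (hclass1 u hu1 hu2) (hclass2 w hw2 hw1)
    · by_cases hw2' : w ∈ P2.support
      · exact hshort2 hu2 hw2'
      · by_cases hu1 : u ∈ P1.support
        · exact hshort1 hu1 hw1
        · exact hcross w u hadjuw.symm (hclass1 w hw1 hw2') (hclass2 u hu2 hu1)
    · exact hshort2 hu2 hw2
  exact ⟨S, A, B, haA, hbB, hAB, hAT, hBT, hAclose, hBclose, hclq⟩

lemma simplicial_lift {V : Type} {G : SimpleGraph V} {s : Set V} {v : V} (hv : v ∈ s)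
    (hnbhd : ∀ w, G.Adj v w → w ∈ s)
    (hsimp : Simplicial (G.induce s) ⟨v, hv⟩) : Simplicial G v := by
  intro x y hx hy hxy
  have hxs : x ∈ s := hnbhd x hx
  have hys : y ∈ s := hnbhd y hy
  have h : (G.induce s).Adj ⟨x, hxs⟩ ⟨y, hys⟩ :=
    hsimp (by exact hx) (by exact hy) (fun h => hxy (congrArg Subtype.val h))
  exact h

set_option maxHeartbeats 2000000 in
lemma dirac : ∀ (n : ℕ) (V : Type) [Fintype V] (G : SimpleGraph V), Fintype.card V ≤ n →
    IsChordal G → ∀ a b : V, a ≠ b → ¬ G.Adj a b →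
    ∃ v₁ v₂ : V, v₁ ≠ v₂ ∧ ¬ G.Adj v₁ v₂ ∧ Simplicial G v₁ ∧ Simplicial G v₂ := by
  intro n
  induction n with
  | zero =>
    intro V _ G hcard _ a _ _ _
    have : IsEmpty V := Fintype.card_eq_zero_iff.mp (le_antisymm hcard (Nat.zero_le _))
    exact isEmptyElim a
  | succ n ih =>
    intro V _ G hcard hch a b hab hnadj
    classical
    obtain ⟨S, A, B, haA, hbB, hAB, hAS, hBS, hAclose, hBclose, hclq⟩ := key hch hab hnadj
    have side : ∀ (C : Set V) (c : V), c ∈ C → (∀ z ∈ C, z ∉ (↑S : Set V)) →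
        (∀ v ∈ C, ∀ w, G.Adj v w → w ∈ C ∨ w ∈ (↑S : Set V)) →
        ∀ (d : V), d ∉ C → d ∉ (↑S : Set V) →
        ∃ v, v ∈ C ∧ Simplicial G v := by
      intro C c hcC hCS hCclose d hdC hdS
      set sA : Set V := C ∪ ↑S with hsA
      have hnbhd : ∀ v ∈ C, ∀ w, G.Adj v w → w ∈ sA := by
        intro v hv w hadj
        rcases hCclose v hv w hadj with h | h
        · exact Or.inl h
        · exact Or.inr h
      have hcsA : c ∈ sA := Or.inl hcC
      have hdsA : d ∉ sA := by
        intro h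
        rcases h with h | h
        · exact hdC h
        · exact hdS h
      have hcard' : Fintype.card ↥sA ≤ n := by
        have hlt : Fintype.card ↥sA < Fintype.card V :=
          Fintype.card_lt_of_injective_of_notMem _ Subtype.val_injective
            (by simpa using hdsA)
        omega
      by_cases hcomp : ∀ u v : ↥sA, u ≠ v → (G.induce sA).Adj u v
      · refine ⟨c, hcC, ?_⟩
        intro x y hx hy hxy
        have hxsA : x ∈ sA := hnbhd c hcC x hx
        have hysA : y ∈ sA := hnbhd c hcC y hy
        exact hcomp ⟨x, hxsA⟩ ⟨y, hysA⟩ (fun h => hxy (congrArg Subtype.val h))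
      · push_neg at hcomp
        obtain ⟨u, v, huv, hnuv⟩ := hcomp
        obtain ⟨v₁, v₂, h12, hn12, hs1, hs2⟩ :=
          ih ↥sA (G.induce sA) hcard' (chordal_induce hch sA) u v huv hnuv
        have hlift : ∀ (w : ↥sA), (↑w : V) ∈ C → Simplicial (G.induce sA) w →
            Simplicial G ↑w := by
          intro w hwC hsimp
          exact simplicial_lift w.2 (fun z hz => hnbhd ↑w hwC z hz) hsimp
        have hone : (↑v₁ : V) ∈ C ∨ (↑v₂ : V) ∈ C := by
          by_contra hcon
          push_neg at hcon
          have h1S : (↑v₁ : V) ∈ S := by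
            rcases v₁.2 with h | h
            · exact absurd h hcon.1
            · exact h
          have h2S : (↑v₂ : V) ∈ S := by
            rcases v₂.2 with h | h
            · exact absurd h hcon.2
            · exact h
          exact hn12 (hclq _ h1S _ h2S (fun h => h12 (Subtype.ext h)))
        rcases hone with h | h
        · exact ⟨↑v₁, h, hlift v₁ h hs1⟩
        · exact ⟨↑v₂, h, hlift v₂ h hs2⟩
    obtain ⟨vA, hvA, hsimpA⟩ :=
      side A a haA hAS hAclose b (fun h => hAB b ⟨h, hbB⟩) (hBS b hbB)
    obtain ⟨vB, hvB, hsimpB⟩ :=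
      side B b hbB hBS hBclose a (fun h => hAB a ⟨haA, h⟩) (hAS a haA)
    refine ⟨vA, vB, ?_, ?_, hsimpA, hsimpB⟩
    · intro h
      exact hAB vA ⟨hvA, h ▸ hvB⟩
    · intro hadj
      rcases hAclose vA hvA vB hadj with h | h
      · exact hAB vB ⟨h, hvB⟩
      · exact hBS vB hvB h

lemma exists_simplicial {V : Type} [Fintype V] {G : SimpleGraph V} (hch : IsChordal G)
    [Nonempty V] : ∃ v, Simplicial G v := by
  classical
  by_cases hcomp : ∀ a b : V, a ≠ b → G.Adj a b
  · obtain ⟨v⟩ := ‹Nonempty V›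
    exact ⟨v, fun x y _ _ hxy => hcomp x y hxy⟩
  · push_neg at hcomp
    obtain ⟨a, b, hab, hnadj⟩ := hcomp
    obtain ⟨v, -, -, -, hs, -⟩ := dirac (Fintype.card V) V G le_rfl hch a b hab hnadj
    exact ⟨v, hs⟩

lemma amo_empty {V : Type} [IsEmpty V] (G : SimpleGraph V) :
    IsAMO G (fun _ _ => False) := by
  refine ⟨⟨fun u _ h => h.elim, fun u => isEmptyElim u⟩, fun v => isEmptyElim v, ?_⟩
  rintro ⟨a, -⟩
  exact isEmptyElim a

lemma amoAux : ∀ (n : ℕ) (V : Type) [Fintype V] (G : SimpleGraph V), Fintype.card V ≤ n →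
    IsChordal G → ∃ D : V → V → Prop, IsAMO G D := by
  intro n
  induction n with
  | zero =>
    intro V _ G hcard _
    haveI : IsEmpty V := Fintype.card_eq_zero_iff.mp (le_antisymm hcard (Nat.zero_le _))
    exact ⟨_, amo_empty G⟩
  | succ n ih =>
    intro V _ G hcard hch
    classical
    by_cases hE : IsEmpty V
    · exact ⟨_, amo_empty G⟩
    haveI : Nonempty V := not_isEmpty_iff.mp hE
    obtain ⟨v, hv⟩ := exists_simplicial hch
    set s : Set V := {x | x ≠ v} with hs
    have hvs : v ∉ s := fun h => h rfl
    have hcard' : Fintype.card ↥s ≤ n := by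
      have hlt : Fintype.card ↥s < Fintype.card V :=
        Fintype.card_lt_of_injective_of_notMem _ Subtype.val_injective (by simpa using hvs)
      omega
    obtain ⟨D', ⟨hadj', hor'⟩, hacyc', hnov'⟩ := ih ↥s (G.induce s) hcard' (chordal_induce hch s)
    refine ⟨fun u w => (w = v ∧ G.Adj u v) ∨ ∃ (hu : u ≠ v) (hw : w ≠ v), D' ⟨u, hu⟩ ⟨w, hw⟩,
      ⟨?_, ?_⟩, ?_, ?_⟩
    · rintro u w (⟨rfl, h⟩ | ⟨hu, hw, hd⟩)
      · exact h
      · exact hadj' _ _ hd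
    · intro u w hadjuw
      by_cases hw : w = v
      · have h1 : (w = v ∧ G.Adj u v) ∨ ∃ (hu : u ≠ v) (hw : w ≠ v), D' ⟨u, hu⟩ ⟨w, hw⟩ :=
          Or.inl ⟨hw, hw ▸ hadjuw⟩
        have h2 : ¬ ((u = v ∧ G.Adj w v) ∨ ∃ (h1 : w ≠ v) (h2 : u ≠ v), D' ⟨w, h1⟩ ⟨u, h2⟩) := by
          rintro (⟨-, h⟩ | ⟨hwv, -, -⟩)
          · exact G.irrefl (hw ▸ h)
          · exact hwv hw
        exact ⟨fun _ => h2, fun _ => h1⟩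
      by_cases hu : u = v
      · have h1 : ¬ ((w = v ∧ G.Adj u v) ∨ ∃ (h1 : u ≠ v) (h2 : w ≠ v), D' ⟨u, h1⟩ ⟨w, h2⟩) := by
          rintro (⟨h, -⟩ | ⟨huv, -, -⟩)
          · exact hw h
          · exact huv hu
        have h2 : (u = v ∧ G.Adj w v) ∨ ∃ (h1 : w ≠ v) (h2 : u ≠ v), D' ⟨w, h1⟩ ⟨u, h2⟩ :=
          Or.inl ⟨hu, hu ▸ hadjuw.symm⟩
        exact iff_of_false h1 (not_not_intro h2)
      · have hiff := hor' ⟨u, hu⟩ ⟨w, hw⟩ hadjuw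
        constructor
        · rintro (⟨h, -⟩ | ⟨hu', hw', hd⟩)
          · exact absurd h hw
          · rintro (⟨h, -⟩ | ⟨hw2, hu2, hd2⟩)
            · exact hu h
            · exact hiff.mp hd hd2
        · intro hnd
          refine Or.inr ⟨hu, hw, hiff.mpr ?_⟩
          intro hd2
          exact hnd (Or.inr ⟨hw, hu, hd2⟩)
    · -- acyclicity
      have hsink : ∀ q, ¬ ((q = v ∧ G.Adj v v) ∨ ∃ (h1 : v ≠ v) (h2 : q ≠ v), D' ⟨v, h1⟩ ⟨q, h2⟩) := by
        rintro q (⟨-, h⟩ | ⟨hvv, -, -⟩)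
        · exact G.irrefl h
        · exact hvv rfl
      have hlift : ∀ p q : V, Relation.TransGen
          (fun u w => (w = v ∧ G.Adj u v) ∨ ∃ (hu : u ≠ v) (hw : w ≠ v), D' ⟨u, hu⟩ ⟨w, hw⟩) p q →
          q ≠ v → ∃ (hp : p ≠ v) (hq : q ≠ v), Relation.TransGen D' ⟨p, hp⟩ ⟨q, hq⟩ := by
        intro p q h
        induction h with
        | @single b hstep =>
          intro hb
          rcases hstep with ⟨rfl, -⟩ | ⟨hp, hb', hd⟩
          · exact absurd rfl hb
          · exact ⟨hp, hb', Relation.TransGen.single hd⟩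
        | @tail b c h1 hstep ih =>
          intro hc
          rcases hstep with ⟨rfl, -⟩ | ⟨hb, hc', hd⟩
          · exact absurd rfl hc
          · obtain ⟨hp, hb2, ht⟩ := ih hb
            exact ⟨hp, hc', Relation.TransGen.tail ht hd⟩
      intro x hx
      by_cases hxv : x = v
      · subst hxv
        obtain ⟨c, hstep, -⟩ := Relation.TransGen.head'_iff.mp hx
        exact hsink c hstep
      · obtain ⟨hp, hq, ht⟩ := hlift x x hx hxv
        exact hacyc' _ ht
    · -- no v-structure
      rintro ⟨p, q, r, hpq, hnadjpq, hDpr, hDqr⟩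
      by_cases hrv : r = v
      · have hpv : G.Adj p v := by
          rcases hDpr with ⟨-, h⟩ | ⟨-, hvv, -⟩
          · exact h
          · exact absurd hrv hvv
        have hqv : G.Adj q v := by
          rcases hDqr with ⟨-, h⟩ | ⟨-, hvv, -⟩
          · exact h
          · exact absurd hrv hvv
        exact hnadjpq (hv hpv.symm hqv.symm hpq)
      · rcases hDpr with ⟨h, -⟩ | ⟨hp, hr, hdp⟩
        · exact hrv h
        rcases hDqr with ⟨h, -⟩ | ⟨hq, hr2, hdq⟩
        · exact hrv h
        exact hnov' ⟨⟨p, hp⟩, ⟨q, hq⟩, ⟨r, hr⟩, fun h => hpq (congrArg Subtype.val h),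
          hnadjpq, hdp, hdq⟩

/-- A finite undirected graph admits an acyclic orientation with no
v-structures (an AMO) if and only if it is chordal. -/
theorem stmt17 {V : Type} [Fintype V] (G : SimpleGraph V) :
    (∃ D : V → V → Prop, IsAMO G D) ↔ IsChordal G := by
  constructor
  · rintro ⟨D, h⟩
    exact amo_chordal h
  · intro hch
    exact amoAux (Fintype.card V) V G le_rfl hch
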